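/- arXiv:1511.01555 — 5 statements merged into one kernel-verified Lean document; each statement's English description precedes it below -/
import Mathlib

section
/- For u in the Bochner space L^p_μ(Ξ;V), the best rank-m approximation error min over rank-≤m elements v of ‖u−v‖_p equals the minimum over all m-dimensional subspaces V_m of V of ‖u − P_{V_m} u‖_p, where P_{V_m} is the orthogonal projection onto V_m. -/
open MeasureTheory
open scoped ENNReal

private lemma aux_extend {V : Type*} [NormedAddCommGroup V] [InnerProductSpace ℝ V]
    [FiniteDimensional ℝ V] :
    ∀ (k : ℕ) (S : Submodule ℝ V), Module.finrank ℝ S + k ≤ Module.finrank ℝ V →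
      ∃ W : Submodule ℝ V, S ≤ W ∧ Module.finrank ℝ W = Module.finrank ℝ S + k := by
  intro k
  induction k with
  | zero => exact fun S _ => ⟨S, le_rfl, by simp⟩
  | succ k ih =>
    intro S hS
    have hlt : Module.finrank ℝ S < Module.finrank ℝ V := by omega
    obtain ⟨x, hx⟩ := S.exists_of_finrank_lt hlt
    have hxS : x ∉ S := by simpa using hx 1 one_ne_zero
    have hx0 : x ≠ 0 := fun h => hxS (h ▸ S.zero_mem)
    have hdisj : Disjoint S (Submodule.span ℝ {x}) := by
      rw [Submodule.disjoint_def]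
      intro y hyS hySpan
      obtain ⟨r, rfl⟩ := Submodule.mem_span_singleton.mp hySpan
      by_contra hne
      have hr : r ≠ 0 := by rintro rfl; simp at hne
      exact hx r hr hyS
    have hrank : Module.finrank ℝ ↥(S ⊔ Submodule.span ℝ {x}) = Module.finrank ℝ S + 1 := by
      have h1 := Submodule.finrank_sup_add_finrank_inf_eq S (Submodule.span ℝ {x})
      rw [hdisj.eq_bot, finrank_bot, finrank_span_singleton hx0] at h1
      omega
    obtain ⟨W, hSW, hW⟩ := ih (S ⊔ Submodule.span ℝ {x}) (by rw [hrank]; omega)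
    exact ⟨W, le_trans le_sup_left hSW, by rw [hW, hrank]; ring⟩

/-- Best rank-`m` approximation error in `L^p_μ(Ξ;V)` equals the minimal projection
error over `m`-dimensional subspaces. -/
theorem stmt0
    {Ξ : Type*} [MeasurableSpace Ξ] (μ : Measure Ξ) [IsProbabilityMeasure μ]
    {V : Type*} [NormedAddCommGroup V] [InnerProductSpace ℝ V] [FiniteDimensional ℝ V]
    (u : Ξ → V) (p : ℝ≥0∞) (hp : 1 ≤ p) (hu : MemLp u p μ)
    (m : ℕ) (hm : m ≤ Module.finrank ℝ V) :
    sInf {e : ℝ≥0∞ | ∃ (v : Fin m → V) (s : Fin m → Ξ → ℝ),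
        e = eLpNorm (fun ξ => u ξ - ∑ i, s i ξ • v i) p μ}
      = sInf {e : ℝ≥0∞ | ∃ W : Submodule ℝ V, Module.finrank ℝ W = m ∧
        e = eLpNorm (fun ξ => u ξ - (W.orthogonalProjectionOnto (u ξ) : V)) p μ} := by
  apply le_antisymm
  · -- every projection error is attained by a rank-m element
    refine le_sInf ?_
    rintro e ⟨W, hW, rfl⟩
    apply sInf_le
    let b : OrthonormalBasis (Fin m) ℝ W := (stdOrthonormalBasis ℝ W).reindex
      (finCongr hW)
    refine ⟨fun i => (b i : V), fun i ξ => inner ℝ ((b i : V)) (u ξ), ?_⟩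
    congr 1
    funext ξ
    congr 1
    rw [b.orthogonalProjectionOnto_apply_eq_sum (u ξ)]
    push_cast
    rfl
  · -- every rank-m element is dominated by a projection error
    refine le_sInf ?_
    rintro e ⟨v, s, rfl⟩
    set S : Submodule ℝ V := Submodule.span ℝ (Set.range v) with hS
    have hSrank : Module.finrank ℝ S ≤ m := by
      classical
      refine (finrank_span_le_card (Set.range v)).trans ?_
      rw [Set.toFinset_card]
      simpa using Fintype.card_range_le v
    obtain ⟨W, hSW, hWrank⟩ := aux_extend (m - Module.finrank ℝ S) S (by omega)
    have hWm : Module.finrank ℝ W = m := by rw [hWrank]; omega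
    refine le_trans (sInf_le ⟨W, hWm, rfl⟩) (eLpNorm_mono fun ξ => ?_)
    have hmem : (∑ i, s i ξ • v i) ∈ W := by
      refine Submodule.sum_mem _ fun i _ => Submodule.smul_mem _ _ (hSW ?_)
      exact Submodule.subset_span (Set.mem_range_self i)
    rw [← Submodule.starProjection_apply, Submodule.starProjection_minimal]
    refine ciInf_le_of_le ⟨0, fun x hx => ?_⟩ (⟨_, hmem⟩ : W) le_rfl
    obtain ⟨y, rfl⟩ := hx
    exact norm_nonneg _
end

section
/- Suppose Δ(·;ξ): V → ℝ satisfies α_Δ‖u(ξ)−v‖_V ≤ Δ(v;ξ) ≤ β_Δ‖u(ξ)−v‖_V for all v ∈ V, ξ ∈ Ξ, with 0 < α_Δ ≤ β_Δ. If V_m minimizes ∫_Ξ inf_{v∈V_m} Δ(v;ξ)² dμ(ξ) over all m-dimensional subspaces, then ‖u − P_{V_m}u‖_2 ≤ (β_Δ/α_Δ) · d_m^{(2)}(u), where d_m^{(2)}(u) is the optimal error over m-dimensional subspaces in the L²_μ(Ξ;V) norm. -/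
open MeasureTheory
open scoped ENNReal

/-- Quasi-optimality of PGD-type subspaces: if `Δ(·;ξ)` is uniformly equivalent to
the distance to `u(ξ)` and `V_m` minimizes `∫_Ξ inf_{v∈V_m} Δ(v;ξ)² dμ` over all
`m`-dimensional subspaces, then `‖u − P_{V_m}u‖₂ ≤ (β_Δ/α_Δ) d_m^{(2)}(u)`. -/
theorem stmt4
    {Ξ : Type*} [MeasurableSpace Ξ] (μ : Measure Ξ) [IsProbabilityMeasure μ]
    {V : Type*} [NormedAddCommGroup V] [InnerProductSpace ℝ V] [FiniteDimensional ℝ V]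
    (u : Ξ → V)
    (Δ : V → Ξ → ℝ) (αΔ βΔ : ℝ) (hα : 0 < αΔ) (hαβ : αΔ ≤ βΔ)
    (hΔ : ∀ (v : V) (ξ : Ξ), αΔ * ‖u ξ - v‖ ≤ Δ v ξ ∧ Δ v ξ ≤ βΔ * ‖u ξ - v‖)
    (m : ℕ) (Vm : Submodule ℝ V) (hVm : Module.finrank ℝ Vm = m)
    (hmin : ∀ W : Submodule ℝ V, Module.finrank ℝ W = m →
      ∫⁻ ξ, (ENNReal.ofReal (⨅ v : Vm, Δ (v : V) ξ)) ^ 2 ∂μ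
        ≤ ∫⁻ ξ, (ENNReal.ofReal (⨅ v : W, Δ (v : V) ξ)) ^ 2 ∂μ) :
    eLpNorm (fun ξ => u ξ - (Vm.orthogonalProjectionOnto (u ξ) : V)) 2 μ
      ≤ ENNReal.ofReal (βΔ / αΔ) *
        sInf {e : ℝ≥0∞ | ∃ W : Submodule ℝ V, Module.finrank ℝ W = m ∧
          e = eLpNorm (fun ξ => u ξ - (W.orthogonalProjectionOnto (u ξ) : V)) 2 μ} := by
  have hβ : 0 < βΔ := hα.trans_le hαβ
  set c := ENNReal.ofReal αΔ with hc
  set C := ENNReal.ofReal βΔ with hC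
  have hc0 : c ≠ 0 := by simp [hc, ENNReal.ofReal_eq_zero, not_le, hα]
  have hC0 : C ≠ 0 := by simp [hC, ENNReal.ofReal_eq_zero, not_le, hβ]
  have hct : c ≠ ⊤ := ENNReal.ofReal_ne_top
  have hCt : C ≠ ⊤ := ENNReal.ofReal_ne_top
  have hd0 : C / c ≠ 0 := (ENNReal.div_pos hC0 hct).ne'
  have hdt : C / c ≠ ⊤ := (ENNReal.div_lt_top hCt hc0).ne
  have key : ∀ W : Submodule ℝ V, Module.finrank ℝ W = m →
      eLpNorm (fun ξ => u ξ - (Vm.orthogonalProjectionOnto (u ξ) : V)) 2 μ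
        ≤ (C / c) * eLpNorm (fun ξ => u ξ - (W.orthogonalProjectionOnto (u ξ) : V)) 2 μ := by
    intro W hW
    have hA : ∀ ξ, c ^ 2 * (‖u ξ - (Vm.orthogonalProjectionOnto (u ξ) : V)‖₊ : ℝ≥0∞) ^ 2
        ≤ (ENNReal.ofReal (⨅ v : Vm, Δ (v : V) ξ)) ^ 2 := by
      intro ξ
      rw [← mul_pow]
      gcongr
      rw [hc, ← ENNReal.ofReal_coe_nnreal, ← ENNReal.ofReal_mul hα.le, coe_nnnorm]
      apply ENNReal.ofReal_le_ofReal
      refine le_ciInf fun v => ?_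
      refine le_trans ?_ (hΔ v ξ).1
      refine mul_le_mul_of_nonneg_left ?_ hα.le
      rw [← Submodule.starProjection_apply, Submodule.starProjection_minimal]
      exact ciInf_le ⟨0, fun x ⟨w, hw⟩ => hw ▸ norm_nonneg _⟩ v
    have hB : ∀ ξ, (ENNReal.ofReal (⨅ v : W, Δ (v : V) ξ)) ^ 2
        ≤ C ^ 2 * (‖u ξ - (W.orthogonalProjectionOnto (u ξ) : V)‖₊ : ℝ≥0∞) ^ 2 := by
      intro ξ
      rw [← mul_pow]
      gcongr
      rw [hC, ← ENNReal.ofReal_coe_nnreal, ← ENNReal.ofReal_mul hβ.le, coe_nnnorm]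
      apply ENNReal.ofReal_le_ofReal
      refine le_trans (ciInf_le ⟨0, ?_⟩ (W.orthogonalProjectionOnto (u ξ))) ?_
      · rintro x ⟨v, rfl⟩
        exact le_trans (mul_nonneg hα.le (norm_nonneg _)) (hΔ v ξ).1
      · exact (hΔ _ ξ).2
    have hint : c ^ 2 * ∫⁻ ξ, (‖u ξ - (Vm.orthogonalProjectionOnto (u ξ) : V)‖₊ : ℝ≥0∞) ^ 2 ∂μ
        ≤ C ^ 2 * ∫⁻ ξ, (‖u ξ - (W.orthogonalProjectionOnto (u ξ) : V)‖₊ : ℝ≥0∞) ^ 2 ∂μ := by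
      rw [← lintegral_const_mul' _ _ (ENNReal.pow_ne_top hct),
        ← lintegral_const_mul' _ _ (ENNReal.pow_ne_top hCt)]
      calc ∫⁻ ξ, c ^ 2 * (‖u ξ - (Vm.orthogonalProjectionOnto (u ξ) : V)‖₊ : ℝ≥0∞) ^ 2 ∂μ
          ≤ ∫⁻ ξ, (ENNReal.ofReal (⨅ v : Vm, Δ (v : V) ξ)) ^ 2 ∂μ := lintegral_mono hA
        _ ≤ ∫⁻ ξ, (ENNReal.ofReal (⨅ v : W, Δ (v : V) ξ)) ^ 2 ∂μ := hmin W hW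
        _ ≤ _ := lintegral_mono hB
    rw [eLpNorm_eq_lintegral_rpow_enorm_toReal two_ne_zero ENNReal.ofNat_ne_top,
      eLpNorm_eq_lintegral_rpow_enorm_toReal two_ne_zero ENNReal.ofNat_ne_top]
    simp only [ENNReal.toReal_ofNat, enorm_eq_nnnorm]
    have h2 : ∀ x : ℝ≥0∞, x ^ (2:ℝ) = x ^ (2:ℕ) := fun x => by
      rw [← ENNReal.rpow_natCast]; norm_num
    simp only [h2]
    set A := ∫⁻ ξ, (‖u ξ - (Vm.orthogonalProjectionOnto (u ξ) : V)‖₊ : ℝ≥0∞) ^ (2:ℕ) ∂μ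
    set B := ∫⁻ ξ, (‖u ξ - (W.orthogonalProjectionOnto (u ξ) : V)‖₊ : ℝ≥0∞) ^ (2:ℕ) ∂μ
    have step : c * A ^ (1/2:ℝ) ≤ C * B ^ (1/2:ℝ) := by
      calc c * A ^ (1/2:ℝ) = (c ^ 2 * A) ^ (1/2:ℝ) := by
            rw [ENNReal.mul_rpow_of_nonneg _ _ (by norm_num),
              ← ENNReal.rpow_natCast c 2, ← ENNReal.rpow_mul]
            norm_num
        _ ≤ (C ^ 2 * B) ^ (1/2:ℝ) := ENNReal.rpow_le_rpow hint (by norm_num)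
        _ = C * B ^ (1/2:ℝ) := by
            rw [ENNReal.mul_rpow_of_nonneg _ _ (by norm_num),
              ← ENNReal.rpow_natCast C 2, ← ENNReal.rpow_mul]
            norm_num
    have hre : C / c * B ^ (1/2:ℝ) = C * B ^ (1/2:ℝ) / c := by
      simp only [div_eq_mul_inv]; rw [mul_right_comm]
    rw [hre, ENNReal.le_div_iff_mul_le (Or.inl hc0) (Or.inl hct), mul_comm]
    exact step
  rw [ENNReal.ofReal_div_of_pos hα, ← hc, ← hC]
  rw [mul_comm, ← ENNReal.div_le_iff_le_mul (Or.inl hd0) (Or.inl hdt)]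
  refine le_sInf ?_
  rintro e ⟨W, hW, rfl⟩
  rw [ENNReal.div_le_iff_le_mul (Or.inl hd0) (Or.inl hdt), mul_comm]
  exact key W hW
end

section
/- Under the assumptions that Δ satisfies α_Δ‖u(ξ)−v‖ ≤ Δ(v;ξ) ≤ β_Δ‖u(ξ)−v‖ and that the projection u_m(ξ) onto V_m satisfies ‖u(ξ)−u_m(ξ)‖ ≤ c(ξ) min_{v∈V_m}‖u(ξ)−v‖ with c(ξ) ≥ 1 bounded, the greedy point ξ*^{m+1} maximizing Δ(u_m(ξ);ξ) over a finite set Ξ_K satisfies ‖u(ξ*^{m+1}) − P_{V_m}u(ξ*^{m+1})‖_V ≥ γ max_{ξ∈Ξ_K} ‖u(ξ) − P_{V_m}u(ξ)‖_V with γ = (α_Δ/β_Δ) · inf_{ξ∈Ξ_K} c(ξ)^{-1}. -/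
/-- Weak greedy property of the Reduced Basis greedy algorithm: the greedy point
`ξ*` maximizing the error indicator `Δ(u_m(ξ);ξ)` over the training set `Ξ_K`
satisfies `‖u(ξ*) − P_{V_m}u(ξ*)‖ ≥ γ max_{ξ∈Ξ_K} ‖u(ξ) − P_{V_m}u(ξ)‖`
with `γ = (α_Δ/β_Δ)·inf_{ξ∈Ξ_K} c(ξ)⁻¹`. -/
theorem stmt5
    {Ξ : Type*} {V : Type*} [NormedAddCommGroup V] [InnerProductSpace ℝ V]
    [FiniteDimensional ℝ V]
    (u : Ξ → V) (ΞK : Finset Ξ) (hΞK : ΞK.Nonempty)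
    (Vm : Submodule ℝ V)
    (Δ : V → Ξ → ℝ) (αΔ βΔ : ℝ) (hα : 0 < αΔ) (hαβ : αΔ ≤ βΔ)
    (hΔ : ∀ (v : V) (ξ : Ξ), αΔ * ‖u ξ - v‖ ≤ Δ v ξ ∧ Δ v ξ ≤ βΔ * ‖u ξ - v‖)
    (um : Ξ → V) (hum : ∀ ξ, um ξ ∈ Vm)
    (c : Ξ → ℝ) (hc : ∀ ξ, 1 ≤ c ξ)
    (hquasi : ∀ ξ, ‖u ξ - um ξ‖ ≤ c ξ * ‖u ξ - (Vm.orthogonalProjectionOnto (u ξ) : V)‖)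
    (ξs : Ξ) (hξs : ξs ∈ ΞK)
    (hgreedy : ∀ ξ ∈ ΞK, Δ (um ξ) ξ ≤ Δ (um ξs) ξs) :
    ∀ ξ ∈ ΞK,
      (αΔ / βΔ) * (⨅ ξ' : ΞK, (c ξ'.1)⁻¹) *
          ‖u ξ - (Vm.orthogonalProjectionOnto (u ξ) : V)‖
        ≤ ‖u ξs - (Vm.orthogonalProjectionOnto (u ξs) : V)‖ := by
  intro ξ hξ
  have hβ : 0 < βΔ := lt_of_lt_of_le hα hαβ
  have hcs : 0 < c ξs := lt_of_lt_of_le one_pos (hc ξs)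
  -- projection is minimal
  have hproj : ‖u ξ - (Vm.orthogonalProjectionOnto (u ξ) : V)‖ ≤ ‖u ξ - um ξ‖ := by
    rw [← Submodule.starProjection_apply, Submodule.starProjection_minimal]
    exact ciInf_le ⟨0, by rintro x ⟨w, rfl⟩; exact norm_nonneg _⟩ (⟨um ξ, hum ξ⟩ : Vm)
  -- main chain
  have key : αΔ * ‖u ξ - (Vm.orthogonalProjectionOnto (u ξ) : V)‖
      ≤ βΔ * (c ξs * ‖u ξs - (Vm.orthogonalProjectionOnto (u ξs) : V)‖) := by
    calc αΔ * ‖u ξ - (Vm.orthogonalProjectionOnto (u ξ) : V)‖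
        ≤ αΔ * ‖u ξ - um ξ‖ := by
          exact mul_le_mul_of_nonneg_left hproj hα.le
      _ ≤ Δ (um ξ) ξ := (hΔ (um ξ) ξ).1
      _ ≤ Δ (um ξs) ξs := hgreedy ξ hξ
      _ ≤ βΔ * ‖u ξs - um ξs‖ := (hΔ (um ξs) ξs).2
      _ ≤ βΔ * (c ξs * ‖u ξs - (Vm.orthogonalProjectionOnto (u ξs) : V)‖) :=
          mul_le_mul_of_nonneg_left (hquasi ξs) hβ.le
  -- infimum bound
  have hinf : (⨅ ξ' : ΞK, (c ξ'.1)⁻¹) ≤ (c ξs)⁻¹ := by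
    haveI : Nonempty ΞK := ⟨⟨ξs, hξs⟩⟩
    exact ciInf_le (Finite.bddBelow_range _) (⟨ξs, hξs⟩ : ΞK)
  have h1 : (αΔ / βΔ) * (⨅ ξ' : ΞK, (c ξ'.1)⁻¹) *
        ‖u ξ - (Vm.orthogonalProjectionOnto (u ξ) : V)‖
      ≤ (αΔ / βΔ) * (c ξs)⁻¹ * ‖u ξ - (Vm.orthogonalProjectionOnto (u ξ) : V)‖ := by
    apply mul_le_mul_of_nonneg_right _ (norm_nonneg _)
    exact mul_le_mul_of_nonneg_left hinf (div_nonneg hα.le hβ.le)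
  refine h1.trans ?_
  rw [div_mul_eq_mul_div, div_mul_eq_mul_div, div_le_iff₀ hβ]
  have h2 := mul_le_mul_of_nonneg_left key (inv_nonneg.mpr hcs.le)
  calc αΔ * (c ξs)⁻¹ * ‖u ξ - (Vm.orthogonalProjectionOnto (u ξ) : V)‖
      = (c ξs)⁻¹ * (αΔ * ‖u ξ - (Vm.orthogonalProjectionOnto (u ξ) : V)‖) := by ring
    _ ≤ (c ξs)⁻¹ * (βΔ * (c ξs * ‖u ξs - (Vm.orthogonalProjectionOnto (u ξs) : V)‖)) := h2
    _ = ‖u ξs - (Vm.orthogonalProjectionOnto (u ξs) : V)‖ * βΔ := by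
        field_simp
end

section
/- For any subsets α, β, with β ⊆ α ⊆ D, and any tensor v, rank_α(v) ≤ rank_β(v) · rank_{α∖β}(v). -/
/-- `v` admits a representation `v(ξ) = ∑_{i=1}^r f_i(ξ_γ) g_i(ξ_{γ^c})`. -/
def hasAlphaRepr {d : ℕ} {Ξ : Fin d → Type*} (γ : Set (Fin d)) (r : ℕ)
    (v : (∀ ν, Ξ ν) → ℝ) : Prop :=
  ∃ (f : Fin r → ((∀ ν : {ν // ν ∈ γ}, Ξ ν.1) → ℝ))
    (g : Fin r → ((∀ ν : {ν // ν ∈ (γᶜ : Set (Fin d))}, Ξ ν.1) → ℝ)),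
    ∀ x, v x = ∑ i, f i (fun ν => x ν.1) * g i (fun ν => x ν.1)

/-- The `γ`-rank of a multivariate function. -/
noncomputable def rankAlpha {d : ℕ} {Ξ : Fin d → Type*} (γ : Set (Fin d))
    (v : (∀ ν, Ξ ν) → ℝ) : ℕ :=
  sInf {r | hasAlphaRepr γ r v}

lemma hasAlphaRepr_of_fintype {d : ℕ} {Ξ : Fin d → Type*} (γ : Set (Fin d))
    {ι : Type*} [Fintype ι] (v : (∀ ν, Ξ ν) → ℝ)
    (f : ι → ((∀ ν : {ν // ν ∈ γ}, Ξ ν.1) → ℝ))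
    (g : ι → ((∀ ν : {ν // ν ∈ (γᶜ : Set (Fin d))}, Ξ ν.1) → ℝ))
    (h : ∀ x, v x = ∑ i, f i (fun ν => x ν.1) * g i (fun ν => x ν.1)) :
    hasAlphaRepr γ (Fintype.card ι) v := by
  let e := Fintype.equivFin ι
  refine ⟨f ∘ e.symm, g ∘ e.symm, fun x => ?_⟩
  rw [h x]
  exact (e.symm.sum_comp fun i => f i (fun ν => x ν.1) * g i (fun ν => x ν.1)).symm

lemma hasAlphaRepr_card {d : ℕ} {Ξ : Fin d → Type*} [∀ ν, Fintype (Ξ ν)]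
    (γ : Set (Fin d)) (v : (∀ ν, Ξ ν) → ℝ) :
    ∃ r, hasAlphaRepr γ r v := by
  classical
  have : Fintype (∀ ν : {ν // ν ∈ γ}, Ξ ν.1) := Fintype.ofFinite _
  refine ⟨Fintype.card (∀ ν : {ν // ν ∈ γ}, Ξ ν.1), hasAlphaRepr_of_fintype γ v
    (fun a a' => if a' = a then (1:ℝ) else 0)
    (fun a b => v (fun ν => if hν : ν ∈ γ then a ⟨ν, hν⟩ else b ⟨ν, hν⟩)) fun x => ?_⟩
  show v x = ∑ a : (∀ ν : {ν // ν ∈ γ}, Ξ ν.1),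
    (if (fun ν : {ν // ν ∈ γ} => x ν.1) = a then (1:ℝ) else 0) *
      v (fun ν => if hν : ν ∈ γ then a ⟨ν, hν⟩ else x ν)
  rw [Finset.sum_eq_single (fun ν : {ν // ν ∈ γ} => x ν.1)]
  · rw [if_pos rfl, one_mul]
    congr 1
    funext ν
    split <;> rfl
  · intro a _ ha
    rw [if_neg (fun hh => ha hh.symm), zero_mul]
  · intro hh; exact absurd (Finset.mem_univ _) hh

set_option maxHeartbeats 2000000 in
/-- Submultiplicativity of the `α`-ranks: for `β ⊆ α`,
`rank_α(v) ≤ rank_β(v) · rank_{α∖β}(v)`. -/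
theorem stmt10 {d : ℕ} {Ξ : Fin d → Type*} [∀ ν, Fintype (Ξ ν)]
    (α β : Set (Fin d)) (hβα : β ⊆ α)
    (v : (∀ ν, Ξ ν) → ℝ) :
    rankAlpha α v ≤ rankAlpha β v * rankAlpha (α \ β) v := by
  classical
  obtain ⟨f, h, hfh⟩ : hasAlphaRepr β (rankAlpha β v) v :=
    Nat.sInf_mem (hasAlphaRepr_card β v)
  obtain ⟨g, k, hgk⟩ : hasAlphaRepr (α \ β) (rankAlpha (α \ β) v) v :=
    Nat.sInf_mem (hasAlphaRepr_card (α \ β) v)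
  -- notation for the parameter spaces
  let Pβ := (∀ ν : {ν // ν ∈ β}, Ξ ν.1)
  let Pβc := (∀ ν : {ν // ν ∈ (βᶜ : Set (Fin d))}, Ξ ν.1)
  let Pαc := (∀ ν : {ν // ν ∈ (αᶜ : Set (Fin d))}, Ξ ν.1)
  let Pαβ := (∀ ν : {ν // ν ∈ (α \ β : Set (Fin d))}, Ξ ν.1)
  -- combining maps
  let combβ : Pβ → Pβc → (∀ ν, Ξ ν) := fun a b ν =>
    if hν : ν ∈ β then a ⟨ν, hν⟩ else b ⟨ν, hν⟩
  -- the slice of v at a fixed value of the βᶜ variables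
  let slice : Pβc → (Pβ → ℝ) := fun bb a => v (combβ a bb)
  have hslice : ∀ bb : Pβc, slice bb = ∑ i, h i bb • f i := by
    intro bb
    funext a
    show v (combβ a bb) = (∑ i, h i bb • f i) a
    rw [hfh (combβ a bb)]
    simp only [Finset.sum_apply, Pi.smul_apply, smul_eq_mul]
    refine Finset.sum_congr rfl fun i _ => ?_
    have h1 : (fun ν : {ν // ν ∈ β} => combβ a bb ν.1) = a := by
      funext ν; exact dif_pos ν.2
    have h2 : (fun ν : {ν // ν ∈ (βᶜ : Set (Fin d))} => combβ a bb ν.1) = bb := by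
      funext ν; exact dif_neg ν.2
    rw [h1, h2, mul_comm]
  -- the span of the f's
  let W : Submodule ℝ (Pβ → ℝ) := Submodule.span ℝ (Set.range f)
  have hWfd : FiniteDimensional ℝ W := FiniteDimensional.span_of_finite ℝ (Set.finite_range f)
  set m := Module.finrank ℝ W with hmdef
  have hm : m ≤ rankAlpha β v := by
    have h0 := finrank_range_le_card (R := ℝ) f
    rw [Fintype.card_fin] at h0
    exact h0
  let b : Module.Basis (Fin m) ℝ W := Module.finBasis ℝ W
  obtain ⟨W', hW'⟩ := Submodule.exists_isCompl W
  let π : (Pβ → ℝ) →ₗ[ℝ] W := W.projectionOnto W' hW'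
  have hslice_mem : ∀ bb : Pβc, slice bb ∈ W := by
    intro bb
    rw [hslice bb]
    exact Submodule.sum_mem _ fun i _ =>
      Submodule.smul_mem _ _ (Submodule.subset_span (Set.mem_range_self i))
  -- coefficient functions
  let c : Fin m → Pβc → ℝ := fun p bb => b.repr (π (slice bb)) p
  have key : ∀ bb : Pβc, slice bb = ∑ p, c p bb • (b p : Pβ → ℝ) := by
    intro bb
    have h1 : π (slice bb) = ⟨slice bb, hslice_mem bb⟩ :=
      Submodule.projectionOnto_apply_left hW' ⟨slice bb, hslice_mem bb⟩
    have h2 := b.sum_repr ⟨slice bb, hslice_mem bb⟩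
    calc slice bb = ((⟨slice bb, hslice_mem bb⟩ : W) : Pβ → ℝ) := rfl
      _ = ((∑ p, b.repr ⟨slice bb, hslice_mem bb⟩ p • b p : W) : Pβ → ℝ) := by rw [h2]
      _ = ∑ p, c p bb • (b p : Pβ → ℝ) := by
          rw [Submodule.coe_sum]
          refine Finset.sum_congr rfl fun p _ => ?_
          rw [SetLike.val_smul]
          congr 1
          exact (congrArg (fun w : W => b.repr w p) h1).symm
  -- combining the α\β and αᶜ variables into the βᶜ variables
  have hmem1 : ∀ ν : {ν // ν ∈ (βᶜ : Set (Fin d))}, ν.1 ∈ α → ν.1 ∈ α \ β :=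
    fun ν hν => ⟨hν, ν.2⟩
  have hmem2 : ∀ ν : {ν // ν ∈ (βᶜ : Set (Fin d))}, ¬ ν.1 ∈ α → ν.1 ∈ (αᶜ : Set (Fin d)) :=
    fun ν hν => hν
  let combR : Pαβ → Pαc → Pβc := fun z y ν =>
    if hν : ν.1 ∈ α then z ⟨ν.1, hmem1 ν hν⟩ else y ⟨ν.1, hmem2 ν hν⟩
  -- combining the β and αᶜ variables into the (α\β)ᶜ variables
  have hmem3 : ∀ ν : {ν // ν ∈ ((α \ β)ᶜ : Set (Fin d))}, ¬ ν.1 ∈ β → ν.1 ∈ (αᶜ : Set (Fin d)) := by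
    intro ν hν hν2
    exact ν.2 ⟨hν2, hν⟩
  let comb2 : Pβ → Pαc → (∀ ν : {ν // ν ∈ ((α \ β)ᶜ : Set (Fin d))}, Ξ ν.1) := fun a y ν =>
    if hν : ν.1 ∈ β then a ⟨ν.1, hν⟩ else y ⟨ν.1, hmem3 ν hν⟩
  let e : Fin m → Fin (rankAlpha (α \ β) v) → Pαc → ℝ := fun p j y =>
    b.repr (π (fun a => k j (comb2 a y))) p
  have keyB : ∀ (z : Pαβ) (y : Pαc) (p : Fin m),
      c p (combR z y) = ∑ j, g j z * e p j y := by
    intro z y p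
    have hsl : slice (combR z y) = ∑ j, g j z • (fun a => k j (comb2 a y)) := by
      funext a
      show v (combβ a (combR z y)) = (∑ j, g j z • fun a => k j (comb2 a y)) a
      rw [hgk (combβ a (combR z y))]
      simp only [Finset.sum_apply, Pi.smul_apply, smul_eq_mul]
      refine Finset.sum_congr rfl fun j _ => ?_
      have h1 : (fun ν : {ν // ν ∈ (α \ β : Set (Fin d))} => combβ a (combR z y) ν.1) = z := by
        funext ν
        have hb : ¬ ν.1 ∈ β := ν.2.2
        have ha : ν.1 ∈ α := ν.2.1
        show combβ a (combR z y) ν.1 = z ν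
        have e1 : combβ a (combR z y) ν.1 = combR z y ⟨ν.1, hb⟩ := dif_neg hb
        have e2 : combR z y ⟨ν.1, hb⟩ = z ⟨ν.1, hmem1 ⟨ν.1, hb⟩ ha⟩ := dif_pos ha
        rw [e1, e2]
      have h2 : (fun ν : {ν // ν ∈ ((α \ β)ᶜ : Set (Fin d))} => combβ a (combR z y) ν.1)
          = comb2 a y := by
        funext ν
        show combβ a (combR z y) ν.1 = comb2 a y ν
        by_cases hb : ν.1 ∈ β
        · have e1 : combβ a (combR z y) ν.1 = a ⟨ν.1, hb⟩ := dif_pos hb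
          have e2 : comb2 a y ν = a ⟨ν.1, hb⟩ := dif_pos hb
          rw [e1, e2]
        · have ha : ¬ ν.1 ∈ α := fun ha => ν.2 ⟨ha, hb⟩
          have e1 : combβ a (combR z y) ν.1 = combR z y ⟨ν.1, hb⟩ := dif_neg hb
          have e2 : combR z y ⟨ν.1, hb⟩ = y ⟨ν.1, hmem2 ⟨ν.1, hb⟩ ha⟩ := dif_neg ha
          have e3 : comb2 a y ν = y ⟨ν.1, hmem3 ν hb⟩ := dif_neg hb
          rw [e1, e2, e3]
      rw [h1, h2, mul_comm]
    show b.repr (π (slice (combR z y))) p = ∑ j, g j z * e p j y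
    rw [hsl, map_sum, map_sum]
    simp only [map_smul, Finsupp.coe_finset_sum, Finset.sum_apply, Finsupp.coe_smul,
      Pi.smul_apply, smul_eq_mul]
    rfl
  -- the final representation
  let F : Fin m × Fin (rankAlpha (α \ β) v) → (∀ ν : {ν // ν ∈ α}, Ξ ν.1) → ℝ := fun pj w =>
    (b pj.1 : Pβ → ℝ) (fun ν => w ⟨ν.1, hβα ν.2⟩) * g pj.2 (fun ν => w ⟨ν.1, ν.2.1⟩)
  let G : Fin m × Fin (rankAlpha (α \ β) v) → Pαc → ℝ := fun pj y => e pj.1 pj.2 y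
  have hrep : ∀ x, v x = ∑ pj : Fin m × Fin (rankAlpha (α \ β) v),
      F pj (fun ν => x ν.1) * G pj (fun ν => x ν.1) := by
    intro x
    have hx : combβ (fun ν => x ν.1) (fun ν => x ν.1) = x := by
      funext ν
      by_cases hν : ν ∈ β
      · exact dif_pos hν
      · exact dif_neg hν
    have hcombR : (fun ν : {ν // ν ∈ (βᶜ : Set (Fin d))} => x ν.1)
        = combR (fun ν => x ν.1) (fun ν => x ν.1) := by
      funext ν
      by_cases hν : ν.1 ∈ α
      · have e1 : combR (fun ν => x ν.1) (fun ν => x ν.1) ν = x ν.1 := dif_pos hν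
        exact e1.symm
      · have e1 : combR (fun ν => x ν.1) (fun ν => x ν.1) ν = x ν.1 := dif_neg hν
        exact e1.symm
    have step1 : v x = slice (fun ν => x ν.1) (fun ν => x ν.1) := (congrArg v hx).symm
    have step4 : ∀ p : Fin m, c p (fun ν => x ν.1) =
        ∑ j, g j (fun ν => x ν.1) * e p j (fun ν => x ν.1) := by
      intro p
      rw [hcombR]
      exact keyB (fun ν => x ν.1) (fun ν => x ν.1) p
    calc v x = slice (fun ν => x ν.1) (fun ν => x ν.1) := step1
      _ = (∑ p, c p (fun ν => x ν.1) • (b p : Pβ → ℝ)) (fun ν => x ν.1) :=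
          congrFun (key (fun ν => x ν.1)) (fun ν => x ν.1)
      _ = ∑ p, c p (fun ν => x ν.1) * (b p : Pβ → ℝ) (fun ν => x ν.1) := by
          simp only [Finset.sum_apply, Pi.smul_apply, smul_eq_mul]
      _ = ∑ p, ∑ j, ((b p : Pβ → ℝ) (fun ν => x ν.1) * g j (fun ν => x ν.1))
            * e p j (fun ν => x ν.1) := by
          refine Finset.sum_congr rfl fun p _ => ?_
          rw [step4 p, Finset.sum_mul]
          exact Finset.sum_congr rfl fun j _ => by ring
      _ = ∑ pj : Fin m × Fin (rankAlpha (α \ β) v),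
            F pj (fun ν => x ν.1) * G pj (fun ν => x ν.1) := by
          rw [Fintype.sum_prod_type]
  have hcard : hasAlphaRepr α (Fintype.card (Fin m × Fin (rankAlpha (α \ β) v))) v :=
    hasAlphaRepr_of_fintype α v F G hrep
  rw [Fintype.card_prod, Fintype.card_fin, Fintype.card_fin] at hcard
  calc rankAlpha α v ≤ m * rankAlpha (α \ β) v := Nat.sInf_le hcard
    _ ≤ rankAlpha β v * rankAlpha (α \ β) v := Nat.mul_le_mul hm le_rfl
end

section
/- Let x_{k+1} = Π_ε(x_k + α(b − A x_k)) be an inexact Richardson iteration in a Hilbert space, where ‖I − αA‖ ≤ ρ < 1 and the truncation map satisfies ‖w − Π_ε(w)‖ ≤ ε‖w‖ for all w. Then limsup_{k→∞} ‖u − x_k‖ ≤ C(ε), where u = A^{-1}b and C(ε) = ε(1+ρ)‖u‖/(1 − ρ − ε(1+ρ)) (for ε small enough that ρ + ε(1+ρ) < 1); in particular C(ε) → 0 as ε → 0. -/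
open Filter

/-- Inexact (truncated) Richardson iteration: if `‖I − αA‖ ≤ ρ < 1` and the truncation
map satisfies `‖w − T_ε(w)‖ ≤ ε‖w‖`, then the iterates `x_{k+1} = T_ε(x_k + α(b − A x_k))`
satisfy `limsup ‖u − x_k‖ ≤ C(ε) = ε(1+ρ)‖u‖/(1 − ρ − ε(1+ρ))`. -/
theorem stmt12
    {H : Type*} [NormedAddCommGroup H] [InnerProductSpace ℝ H] [CompleteSpace H]
    (A : H →L[ℝ] H) (b : H) (u : H) (hu : A u = b)
    (α : ℝ) (ρ : ℝ) (hρ : ‖(1 : H →L[ℝ] H) - α • A‖ ≤ ρ) (hρ1 : ρ < 1) (hρ0 : 0 ≤ ρ)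
    (ε : ℝ) (hε0 : 0 ≤ ε) (hsmall : ρ + ε * (1 + ρ) < 1)
    (T : H → H) (hT : ∀ w : H, ‖w - T w‖ ≤ ε * ‖w‖)
    (x : ℕ → H) (hx : ∀ k, x (k + 1) = T (x k + α • (b - A (x k)))) :
    Filter.limsup (fun k => ‖u - x k‖) atTop
      ≤ ε * (1 + ρ) * ‖u‖ / (1 - ρ - ε * (1 + ρ)) := by
  set q : ℝ := ρ + ε * ρ with hq
  set c : ℝ := ε * ‖u‖ with hc
  have hq0 : 0 ≤ q := by positivity
  have hq1 : q < 1 := by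
    have : q ≤ ρ + ε * (1 + ρ) := by nlinarith
    linarith
  have h1q : 0 < 1 - q := by linarith
  set M : ℝ := c / (1 - q) with hM
  have hMq : q * M + c = M := by
    rw [hM]; field_simp [h1q.ne']
    ring
  -- key one-step estimate
  have key : ∀ k, ‖u - x (k + 1)‖ ≤ q * ‖u - x k‖ + c := by
    intro k
    set w : H := x k + α • (b - A (x k)) with hw
    have huw : u - w = ((1 : H →L[ℝ] H) - α • A) (u - x k) := by
      simp [hw, ← hu, map_sub, smul_sub]
      abel
    have hnw : ‖u - w‖ ≤ ρ * ‖u - x k‖ := by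
      rw [huw]
      calc ‖((1 : H →L[ℝ] H) - α • A) (u - x k)‖
          ≤ ‖(1 : H →L[ℝ] H) - α • A‖ * ‖u - x k‖ :=
            ContinuousLinearMap.le_opNorm _ _
        _ ≤ ρ * ‖u - x k‖ := by
            apply mul_le_mul_of_nonneg_right hρ (norm_nonneg _)
    have hwn : ‖w‖ ≤ ‖u‖ + ρ * ‖u - x k‖ := by
      have hww : u - (u - w) = w := by abel
      calc ‖w‖ = ‖u - (u - w)‖ := by rw [hww]
        _ ≤ ‖u‖ + ‖u - w‖ := norm_sub_le _ _
        _ ≤ ‖u‖ + ρ * ‖u - x k‖ := by linarith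
    calc ‖u - x (k + 1)‖ = ‖(u - w) + (w - T w)‖ := by rw [hx k, ← hw]; abel_nf
      _ ≤ ‖u - w‖ + ‖w - T w‖ := norm_add_le _ _
      _ ≤ ρ * ‖u - x k‖ + ε * ‖w‖ := by
          have := hT w; linarith
      _ ≤ ρ * ‖u - x k‖ + ε * (‖u‖ + ρ * ‖u - x k‖) := by
          nlinarith [mul_le_mul_of_nonneg_left hwn hε0]
      _ = q * ‖u - x k‖ + c := by rw [hq, hc]; ring
  -- iterate: e_k ≤ q^k e_0 + M
  have bnd : ∀ k, ‖u - x k‖ ≤ q ^ k * ‖u - x 0‖ + M := by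
    intro k
    induction k with
    | zero =>
        simp
        have : 0 ≤ M := div_nonneg (by positivity) h1q.le
        linarith
    | succ n ih =>
        calc ‖u - x (n + 1)‖ ≤ q * ‖u - x n‖ + c := key n
          _ ≤ q * (q ^ n * ‖u - x 0‖ + M) + c := by
              nlinarith [mul_le_mul_of_nonneg_left ih hq0]
          _ = q ^ (n + 1) * ‖u - x 0‖ + (q * M + c) := by ring
          _ = q ^ (n + 1) * ‖u - x 0‖ + M := by rw [hMq]
  -- the bounding sequence tends to M
  have htend : Tendsto (fun k => q ^ k * ‖u - x 0‖ + M) atTop (nhds M) := by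
    have h0 : Tendsto (fun k : ℕ => q ^ k * ‖u - x 0‖) atTop (nhds 0) := by
      have := (tendsto_pow_atTop_nhds_zero_of_lt_one hq0 hq1).mul_const ‖u - x 0‖
      simpa using this
    simpa using h0.add tendsto_const_nhds
  have hls : Filter.limsup (fun k => ‖u - x k‖) atTop ≤ M := by
    have h1 : Filter.limsup (fun k => ‖u - x k‖) atTop
        ≤ Filter.limsup (fun k => q ^ k * ‖u - x 0‖ + M) atTop := by
      exact Filter.limsup_le_limsup (Filter.Eventually.of_forall bnd)
        (isCoboundedUnder_le_of_le atTop fun k => norm_nonneg _)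
        htend.isBoundedUnder_le
    rw [htend.limsup_eq] at h1
    exact h1
  refine hls.trans ?_
  apply div_le_div₀ (by positivity)
  · rw [hc]; nlinarith [mul_nonneg (mul_nonneg hε0 hρ0) (norm_nonneg u)]
  · linarith
  · nlinarith [norm_nonneg u]
end
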